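/- Let q be a prime, m ≥ 1, and w : ZMod q → ℕ a map satisfying w(α) = 0 if and only if α = 0 and {w(α) : α ∈ ZMod q, α ≠ 0} = {1, 2, …, m}. Let C be a k-dimensional ZMod q-subspace of (Fin n → ZMod q) such that no coordinate is identically zero (for each i there exists c ∈ C with c i ≠ 0) and whose weight set W(C) equals {1, 2, …, n·m}. Then for every basis v₁, …, v_k of C, writing T = ⋃_{i=2}^{k} supp(v_i) and S' = supp(v₁) \ T, one has |S'| ≤ m·|T| + 1. -/

import Mathlib

/-- The weight of a vector with respect to a coordinate-wise weight function. -/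
def wtVec {q n : ℕ} (w : ZMod q → ℕ) (c : Fin n → ZMod q) : ℕ := ∑ i, w (c i)

/-- The weight set of a set of vectors. -/
def wtSet {q n : ℕ} (w : ZMod q → ℕ) (C : Set (Fin n → ZMod q)) : Set ℕ :=
  {x | ∃ c ∈ C, c ≠ 0 ∧ wtVec w c = x}

theorem stmt0 (q m n k : ℕ) (hq : q.Prime) (hm : 1 ≤ m) (hk : 0 < k)
    (w : ZMod q → ℕ) (hw0 : ∀ α : ZMod q, w α = 0 ↔ α = 0)
    (hwrange : {x | ∃ α : ZMod q, α ≠ 0 ∧ w α = x} = Set.Icc 1 m)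
    (C : Submodule (ZMod q) (Fin n → ZMod q))
    (hdim : Module.finrank (ZMod q) C = k)
    (hnz : ∀ i : Fin n, ∃ c ∈ C, c i ≠ 0)
    (hFWS : wtSet w (C : Set (Fin n → ZMod q)) = Set.Icc 1 (n * m))
    (v : Module.Basis (Fin k) (ZMod q) C)
    (T S' : Set (Fin n))
    (hT : T = ⋃ i ∈ {i : Fin k | i ≠ ⟨0, hk⟩}, Function.support ((v i : C) : Fin n → ZMod q))
    (hS' : S' = Function.support ((v ⟨0, hk⟩ : C) : Fin n → ZMod q) \ T) :
    S'.ncard ≤ m * T.ncard + 1 := by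
  classical
  haveI := Fact.mk hq
  by_contra hcon
  push_neg at hcon
  have hcon' : m * T.ncard + 2 ≤ S'.ncard := hcon
  have hwle : ∀ α : ZMod q, w α ≤ m := by
    intro α
    by_cases hα : α = 0
    · rw [hα, (hw0 0).2 rfl]; exact Nat.zero_le m
    · have : w α ∈ Set.Icc 1 m := by rw [← hwrange]; exact ⟨α, hα, rfl⟩
      exact this.2
  have hTfin : T.Finite := Set.toFinite T
  have hS'fin : S'.Finite := Set.toFinite S'
  have hdisj : Disjoint S' T := by rw [hS']; exact Set.disjoint_sdiff_left
  have hcardn : S'.ncard + T.ncard ≤ n := by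
    have h1 : (S' ∪ T).ncard = S'.ncard + T.ncard := Set.ncard_union_eq hdisj hS'fin hTfin
    have h2 : (S' ∪ T).ncard ≤ (Set.univ : Set (Fin n)).ncard :=
      Set.ncard_le_ncard (Set.subset_univ _) (Set.finite_univ)
    simpa [h1, Set.ncard_univ] using h2
  have hmem : m * T.ncard + 1 ∈ Set.Icc 1 (n * m) := by
    constructor
    · exact Nat.le_add_left 1 _
    · have hn : m * T.ncard + 2 ≤ n := le_trans (le_trans hcon' (Nat.le_add_right _ _)) hcardn
      calc m * T.ncard + 1 ≤ n := by omega
        _ ≤ n * m := Nat.le_mul_of_pos_right n hm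
  rw [← hFWS] at hmem
  obtain ⟨c, hcC, hcne, hcw⟩ := hmem
  set z : Fin k := ⟨0, hk⟩
  set a : Fin k → ZMod q := fun i => v.repr ⟨c, hcC⟩ i with ha
  have hrepr : ∀ j, c j = ∑ i, a i * ((v i : C) : Fin n → ZMod q) j := by
    intro j
    have hsum := v.sum_repr ⟨c, hcC⟩
    have := congrArg (fun x : C => (x : Fin n → ZMod q) j) hsum
    simp only [Submodule.coe_sum, Finset.sum_apply, Submodule.coe_smul, Pi.smul_apply, smul_eq_mul] at this
    exact this.symm
  by_cases h0 : a z = 0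
  · -- c is supported in T, so its weight is ≤ m * |T|
    have hsupp : ∀ j, j ∉ T → c j = 0 := by
      intro j hjT
      rw [hrepr j]
      apply Finset.sum_eq_zero
      intro i _
      by_cases hi : i = z
      · rw [hi, h0, zero_mul]
      · have hvz : ((v i : C) : Fin n → ZMod q) j = 0 := by
          by_contra hne
          apply hjT
          rw [hT]
          exact Set.mem_biUnion (by simpa using hi) hne
        rw [hvz, mul_zero]
    have hle : wtVec w c ≤ m * T.ncard := by
      have : wtVec w c = ∑ j ∈ hTfin.toFinset, w (c j) := by
        rw [wtVec]
        refine (Finset.sum_subset (Finset.subset_univ _) ?_).symm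
        intro j _ hj
        rw [hsupp j (by simpa using hj), (hw0 0).2 rfl]
      rw [this]
      calc ∑ j ∈ hTfin.toFinset, w (c j) ≤ ∑ _j ∈ hTfin.toFinset, m :=
            Finset.sum_le_sum (fun j _ => hwle _)
        _ = hTfin.toFinset.card * m := by rw [Finset.sum_const, smul_eq_mul]
        _ = m * T.ncard := by rw [Set.ncard_eq_toFinset_card T hTfin, mul_comm]
    omega
  · -- c is nonzero on all of S', so its weight is ≥ |S'|
    have hS'nz : ∀ j ∈ S', c j ≠ 0 := by
      intro j hj
      have hjT : j ∉ T := by rw [hS'] at hj; exact hj.2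
      have hj0 : ((v z : C) : Fin n → ZMod q) j ≠ 0 := by
        rw [hS'] at hj; exact hj.1
      have : c j = a z * ((v z : C) : Fin n → ZMod q) j := by
        rw [hrepr j]
        rw [Finset.sum_eq_single z]
        · intro i _ hi
          have hvz : ((v i : C) : Fin n → ZMod q) j = 0 := by
            by_contra hne
            apply hjT
            rw [hT]
            exact Set.mem_biUnion (by simpa using hi) hne
          rw [hvz, mul_zero]
        · intro h; exact absurd (Finset.mem_univ z) h
      rw [this]
      exact mul_ne_zero h0 hj0
    have hge : S'.ncard ≤ wtVec w c := by
      have h1 : ∑ j ∈ hS'fin.toFinset, 1 ≤ ∑ j ∈ hS'fin.toFinset, w (c j) := by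
        apply Finset.sum_le_sum
        intro j hj
        have := hS'nz j (by simpa using hj)
        have hw1 : w (c j) ≠ 0 := fun h => this ((hw0 _).1 h)
        omega
      have h2 : ∑ j ∈ hS'fin.toFinset, w (c j) ≤ wtVec w c := by
        rw [wtVec]
        exact Finset.sum_le_sum_of_subset (Finset.subset_univ _)
      calc S'.ncard = ∑ _j ∈ hS'fin.toFinset, 1 := by
            rw [Finset.sum_const, smul_eq_mul, mul_one, Set.ncard_eq_toFinset_card S' hS'fin]
        _ ≤ wtVec w c := le_trans h1 h2
    omega
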